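/- Let k ≥ 2 be an integer and let τ be a symmetric polynomial matrix whose entries have total degree at most k such that τ x^⊥ = 0 as a polynomial vector. Then there exists a polynomial q of total degree at most k−2 with τ = q · x xᵀ, i.e. τ_{ij} = Xᵢ·Xⱼ·q for all i, j. -/

import Mathlib

open MvPolynomial Matrix

/-- Real polynomials in two variables. -/
abbrev P2 := MvPolynomial (Fin 2) ℝ

/-- The matrix `curl v` of a polynomial vector field, defined row-wise:
`(curl v)_{i1} = ∂₂ vᵢ`, `(curl v)_{i2} = -∂₁ vᵢ`. -/
noncomputable def pcurl (v : Fin 2 → P2) : Matrix (Fin 2) (Fin 2) P2 :=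
  Matrix.of fun i j =>
    if j = 0 then pderiv (1 : Fin 2) (v i) else -(pderiv (0 : Fin 2) (v i))

/-- `sym curl v := (curl v + (curl v)ᵀ)/2`. -/
noncomputable def psymCurl (v : Fin 2 → P2) : Matrix (Fin 2) (Fin 2) P2 :=
  (1 / 2 : ℝ) • (pcurl v + (pcurl v)ᵀ)

/-- `div div τ := Σ_{i,j} ∂ᵢ∂ⱼ τ_{ij}`. -/
noncomputable def pdivDiv (τ : Matrix (Fin 2) (Fin 2) P2) : P2 :=
  ∑ i : Fin 2, ∑ j : Fin 2, pderiv i (pderiv j (τ i j))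

/-- The matrix `x xᵀ q` with `(i,j)`-entry `Xᵢ · Xⱼ · q`. -/
noncomputable def xxT (q : P2) : Matrix (Fin 2) (Fin 2) P2 :=
  Matrix.of fun i j => X i * X j * q

/-- The polynomial vector `x^⊥ = (X₂, -X₁)`. -/
noncomputable def xPerp : Fin 2 → P2 := ![X 1, -X 0]

/-- `rot τ`, with components `(rot τ)ᵢ = ∂₁ τ_{i2} - ∂₂ τ_{i1}`. -/
noncomputable def prot (τ : Matrix (Fin 2) (Fin 2) P2) : Fin 2 → P2 :=
  fun i => pderiv (0 : Fin 2) (τ i 1) - pderiv (1 : Fin 2) (τ i 0)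

/-- The Hessian matrix `∇²q` with entries `∂ᵢ∂ⱼ q`. -/
noncomputable def phess (q : P2) : Matrix (Fin 2) (Fin 2) P2 :=
  Matrix.of fun i j => pderiv i (pderiv j q)

/-- `sym(x^⊥ ⊗ v)`, the symmetric matrix with `(i,j)`-entry
`((x^⊥)ᵢ vⱼ + vᵢ (x^⊥)ⱼ)/2`. -/
noncomputable def symTen (v : Fin 2 → P2) : Matrix (Fin 2) (Fin 2) P2 :=
  Matrix.of fun i j => (1 / 2 : ℝ) • (xPerp i * v j + v i * xPerp j)

/-- The gradient matrix `∇v` with entries `(∇v)_{ij} = ∂ⱼ vᵢ`. -/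
noncomputable def pgrad (v : Fin 2 → P2) : Matrix (Fin 2) (Fin 2) P2 :=
  Matrix.of fun i j => pderiv j (v i)

/-- The symmetric gradient `def v := (∇v + (∇v)ᵀ)/2`. -/
noncomputable def pdef (v : Fin 2 → P2) : Matrix (Fin 2) (Fin 2) P2 :=
  (1 / 2 : ℝ) • (pgrad v + (pgrad v)ᵀ)

/-- The matrix `x^⊥ (x^⊥)ᵀ q` with `(i,j)`-entry `(x^⊥)ᵢ (x^⊥)ⱼ q`. -/
noncomputable def xPerpxPerpT (q : P2) : Matrix (Fin 2) (Fin 2) P2 :=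
  Matrix.of fun i j => xPerp i * xPerp j * q

/-- `rot rot τ := ∂₁(rot τ)₂ − ∂₂(rot τ)₁`. -/
noncomputable def protRot (τ : Matrix (Fin 2) (Fin 2) P2) : P2 :=
  pderiv (0 : Fin 2) (prot τ 1) - pderiv (1 : Fin 2) (prot τ 0)

lemma prime_X_P2 (i : Fin 2) : Prime (X i : P2) := by
  have h0 : Prime (X 0 : P2) := by
    rw [← MulEquiv.prime_iff (MvPolynomial.finSuccEquiv ℝ 1).toMulEquiv]
    simpa [MvPolynomial.finSuccEquiv_X_zero] using Polynomial.prime_X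
  rcases eq_or_ne i 0 with rfl | hi
  · exact h0
  · rw [← MulEquiv.prime_iff (MvPolynomial.renameEquiv ℝ (Equiv.swap (0 : Fin 2) i)).toMulEquiv] at h0
    simpa [Equiv.swap_apply_left] using h0

lemma deg_le (q : P2) (m : ℕ) (hm : ((X 0 : P2) * X 0 * q).totalDegree ≤ m) (hq : q ≠ 0) :
    q.totalDegree ≤ m - 2 := by
  obtain ⟨d, hd, hdeq⟩ := Finset.exists_mem_eq_sup q.support
    (MvPolynomial.support_nonempty.2 hq) fun d => d.sum fun _ e => e
  have hc : MvPolynomial.coeff (d + Finsupp.single 0 1 + Finsupp.single 0 1)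
      (q * X 0 * X 0) = MvPolynomial.coeff d q := by
    rw [MvPolynomial.coeff_mul_X, MvPolynomial.coeff_mul_X]
  have hmem : (d + Finsupp.single 0 1 + Finsupp.single 0 1) ∈ (q * X 0 * X 0).support := by
    rw [MvPolynomial.mem_support_iff, hc]
    exact MvPolynomial.mem_support_iff.1 hd
  have hle := MvPolynomial.le_totalDegree hmem
  have hsum : ((d + Finsupp.single 0 1 + Finsupp.single 0 1).sum fun _ e => e)
      = (d.sum fun _ e => e) + 2 := by
    rw [Finsupp.sum_add_index' (fun _ => rfl) (fun _ _ _ => rfl),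
        Finsupp.sum_add_index' (fun _ => rfl) (fun _ _ _ => rfl),
        Finsupp.sum_single_index rfl]
  have ht : q.totalDegree = d.sum fun _ e => e := hdeq
  have h2 : (q * X 0 * X 0 : P2) = X 0 * X 0 * q := by ring
  rw [h2, hsum, ← ht] at hle
  omega


/-- If a symmetric polynomial matrix of degree ≤ k kills `x^⊥`, then it has
the form `x xᵀ q` with `deg q ≤ k−2`. -/
theorem stmt_9 (k : ℕ) (hk : 2 ≤ k) (τ : Matrix (Fin 2) (Fin 2) P2)
    (hsym : τᵀ = τ) (hdeg : ∀ i j, (τ i j).totalDegree ≤ k)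
    (h : τ.mulVec xPerp = 0) :
    ∃ q : P2, q.totalDegree ≤ k - 2 ∧ ∀ i j, τ i j = X i * X j * q := by
  have hXne : (X 0 : P2) ≠ 0 := MvPolynomial.X_ne_zero 0
  have hnd : ¬ (X 0 : P2) ∣ X 1 := by
    rw [MvPolynomial.X_dvd_X]; decide
  have h0 : ∀ i, τ i 0 * X 1 = τ i 1 * X 0 := by
    intro i
    have hi : τ i 0 * xPerp 0 + τ i 1 * xPerp 1 = 0 := by
      simpa [Matrix.mulVec, dotProduct, Fin.sum_univ_two] using congrFun h i
    simp only [xPerp, Matrix.cons_val_zero, Matrix.cons_val_one, Matrix.head_cons] at hi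
    linear_combination hi
  have hd0 : ∀ i, (X 0 : P2) ∣ τ i 0 := by
    intro i
    have : (X 0 : P2) ∣ τ i 0 * X 1 := ⟨τ i 1, by rw [h0 i]; ring⟩
    rcases (prime_X_P2 0).2.2 _ _ this with h' | h'
    · exact h'
    · exact absurd h' hnd
  obtain ⟨a0, ha0⟩ := hd0 0
  obtain ⟨a1, ha1⟩ := hd0 1
  have hτ01 : τ 0 1 = a0 * X 1 := by
    apply mul_right_cancel₀ hXne
    rw [← h0 0, ha0]; ring
  have hτ11 : τ 1 1 = a1 * X 1 := by
    apply mul_right_cancel₀ hXne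
    rw [← h0 1, ha1]; ring
  have hs : τ 0 1 = τ 1 0 := by
    simpa [Matrix.transpose_apply] using congrFun (congrFun hsym 1) 0
  have hkey : a0 * X 1 = X 0 * a1 := by rw [← hτ01, hs, ha1]
  have hda0 : (X 0 : P2) ∣ a0 := by
    rcases (prime_X_P2 0).2.2 a0 (X 1) ⟨a1, hkey⟩ with h' | h'
    · exact h'
    · exact absurd h' hnd
  obtain ⟨q, hq⟩ := hda0
  have ha1' : a1 = q * X 1 := by
    apply mul_left_cancel₀ hXne
    rw [← hkey, hq]; ring
  refine ⟨q, ?_, ?_⟩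
  · rcases eq_or_ne q 0 with rfl | hq0
    · simp
    · apply deg_le q k _ hq0
      have : τ 0 0 = X 0 * X 0 * q := by rw [ha0, hq]; ring
      rw [← this]; exact hdeg 0 0
  · intro i j
    fin_cases i <;> fin_cases j <;> simp only [Fin.isValue, Fin.zero_eta, Fin.mk_one]
    · rw [ha0, hq]; ring
    · rw [hτ01, hq]; ring
    · rw [ha1, ha1']; ring
    · rw [hτ11, ha1']; ring
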